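/- Let V be an E-valued random variable with density g with respect to μ, where g > 0 on the support, let η be uniform on [0,1) independent of V, and set W := c·g(V)·η for a constant c > 0. Then (V, W) has law ν(· ∩ B)/ν(B) where B = {(x,y) : 0 ≤ y ≤ c·g(x)} and ν = μ × Lebesgue; i.e., (V, W) is uniformly distributed on the region under c·g. -/
import Mathlib


open MeasureTheory Set ProbabilityTheory

theorem stmt14 {E : Type*} [MeasurableSpace E] (μ : Measure E) [SigmaFinite μ]
    (g : E → ℝ) (hg : Measurable g) (hg0 : ∀ x, 0 ≤ g x)
    (hgpos : ∀ x ∈ Function.support g, 0 < g x)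
    (hgint : Integrable g μ) (hgI : 0 < ∫ x, g x ∂μ)
    (c : ℝ) (hc : 0 < c)
    (ν : Measure (E × ℝ)) (hν : ν = μ.prod volume)
    (B : Set (E × ℝ)) (hB : B = {p : E × ℝ | 0 ≤ p.2 ∧ p.2 ≤ c * g p.1})
    {Ω : Type*} [MeasurableSpace Ω] (P : Measure Ω) [IsProbabilityMeasure P]
    (V : Ω → E) (η : Ω → ℝ) (hV : Measurable V) (hη : Measurable η)
    (hVlaw : Measure.map V P = μ.withDensity (fun x => ENNReal.ofReal (g x)))
    (hηlaw : Measure.map η P = volume.restrict (Ico (0:ℝ) 1))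
    (hindep : IndepFun V η P)
    (W : Ω → ℝ) (hW : W = fun ω => c * g (V ω) * η ω) :
    Measure.map (fun ω => (V ω, W ω)) P = (ν B)⁻¹ • ν.restrict B := by
  -- total mass of the density is 1
  have hgI1 : ∫⁻ x, ENNReal.ofReal (g x) ∂μ = 1 := by
    have h := congrArg (fun m : Measure E => m Set.univ) hVlaw
    simpa [Measure.map_apply hV MeasurableSet.univ, withDensity_apply,
      Measure.restrict_univ] using h.symm
  -- B is measurable
  have hBm : MeasurableSet B := by
    rw [hB]
    exact (measurableSet_le measurable_const measurable_snd).inter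
      (measurableSet_le measurable_snd ((measurable_const.mul (hg.comp measurable_fst))))
  -- ν B = ofReal c
  have hslice : ∀ x : E, Prod.mk x ⁻¹' B = Icc 0 (c * g x) := by
    intro x; ext y; simp [hB, mem_Icc]
  have hνB : ν B = ENNReal.ofReal c := by
    rw [hν, Measure.prod_apply hBm]
    have : ∀ x, volume (Prod.mk x ⁻¹' B) = ENNReal.ofReal c * ENNReal.ofReal (g x) := by
      intro x
      rw [hslice x, Real.volume_Icc, sub_zero, ENNReal.ofReal_mul hc.le]
    simp_rw [this]
    rw [lintegral_const_mul _ hg.ennreal_ofReal, hgI1, mul_one]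
  -- joint law of (V, η)
  have hjoint : Measure.map (fun ω => (V ω, η ω)) P
      = (μ.withDensity (fun x => ENNReal.ofReal (g x))).prod (volume.restrict (Ico (0:ℝ) 1)) := by
    rw [← hVlaw, ← hηlaw]
    exact (indepFun_iff_map_prod_eq_prod_map_map hV.aemeasurable hη.aemeasurable).mp hindep
  set f : E × ℝ → E × ℝ := fun p => (p.1, c * g p.1 * p.2) with hf_def
  have hf : Measurable f :=
    measurable_fst.prodMk ((measurable_const.mul (hg.comp measurable_fst)).mul measurable_snd)
  have hVW : (fun ω => (V ω, W ω)) = f ∘ (fun ω => (V ω, η ω)) := by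
    funext ω; simp [hf_def, hW]
  have hmap : Measure.map (fun ω => (V ω, W ω)) P
      = Measure.map f ((μ.withDensity (fun x => ENNReal.ofReal (g x))).prod
          (volume.restrict (Ico (0:ℝ) 1))) := by
    rw [hVW, ← Measure.map_map hf (hV.prodMk hη), hjoint]
  rw [hmap, hνB]
  ext s hs
  -- compute the RHS
  have hsB : ∀ x : E, Prod.mk x ⁻¹' (s ∩ B) = (Prod.mk x ⁻¹' s) ∩ Icc 0 (c * g x) := by
    intro x; rw [preimage_inter, hslice x]
  have hRHS : ((ENNReal.ofReal c)⁻¹ • ν.restrict B) s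
      = (ENNReal.ofReal c)⁻¹ * ∫⁻ x, volume ((Prod.mk x ⁻¹' s) ∩ Icc 0 (c * g x)) ∂μ := by
    rw [Measure.smul_apply, smul_eq_mul, Measure.restrict_apply hs, hν,
      Measure.prod_apply (hs.inter hBm)]
    simp_rw [hsB]
  rw [hRHS]
  -- compute the LHS
  have hps : MeasurableSet (f ⁻¹' s) := hf hs
  rw [Measure.map_apply hf hs, Measure.prod_apply hps,
    lintegral_withDensity_eq_lintegral_mul _ hg.ennreal_ofReal
      (measurable_measure_prodMk_left hps)]
  simp only [Pi.mul_apply]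
  have hpt : ∀ x : E,
      (fun x => ENNReal.ofReal (g x)) x * (volume.restrict (Ico (0:ℝ) 1)) (Prod.mk x ⁻¹' (f ⁻¹' s))
      = (ENNReal.ofReal c)⁻¹ * volume ((Prod.mk x ⁻¹' s) ∩ Icc 0 (c * g x)) := by
    intro x
    beta_reduce
    have hT : MeasurableSet (Prod.mk x ⁻¹' s) := measurable_prodMk_left hs
    have hpre : Prod.mk x ⁻¹' (f ⁻¹' s) = (c * g x * ·) ⁻¹' (Prod.mk x ⁻¹' s) := by
      ext u; simp [hf_def]
    rcases eq_or_lt_of_le (hg0 x) with h0 | hx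
    · -- g x = 0
      have h0' : g x = 0 := h0.symm
      have : volume ((Prod.mk x ⁻¹' s) ∩ Icc 0 (c * g x)) = 0 := by
        refine measure_mono_null (inter_subset_right) ?_
        simp [h0']
      rw [this]
      simp [h0']
    · -- g x > 0
      set a := c * g x with ha_def
      have ha : 0 < a := mul_pos hc hx
      have hAm : MeasurableSet ((a * ·) ⁻¹' (Prod.mk x ⁻¹' s)) :=
        (measurable_const_mul a) hT
      rw [hpre, Measure.restrict_apply hAm]
      have hset : ((a * ·) ⁻¹' (Prod.mk x ⁻¹' s)) ∩ Ico 0 1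
          = (a * ·) ⁻¹' ((Prod.mk x ⁻¹' s) ∩ Ico 0 a) := by
        ext u
        simp only [mem_inter_iff, mem_preimage, mem_Ico, preimage_inter]
        constructor
        · rintro ⟨h1, h2, h3⟩
          exact ⟨h1, mul_nonneg ha.le h2, by nlinarith⟩
        · rintro ⟨h1, h2, h3⟩
          refine ⟨h1, nonneg_of_mul_nonneg_right h2 ha, ?_⟩
          nlinarith
      rw [hset, Real.volume_preimage_mul_left ha.ne' _]
      have hae : volume ((Prod.mk x ⁻¹' s) ∩ Ico 0 a)
          = volume ((Prod.mk x ⁻¹' s) ∩ Icc 0 a) := by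
        refine measure_congr ?_
        exact (Filter.EventuallyEq.refl _ _).inter Ico_ae_eq_Icc
      rw [hae, ← mul_assoc, ← ENNReal.ofReal_mul (hg0 x), abs_of_pos (inv_pos.mpr ha),
        ha_def]
      congr 1
      rw [mul_inv, ← mul_assoc, mul_comm (g x) c⁻¹, mul_assoc,
        mul_inv_cancel₀ hx.ne', mul_one, ENNReal.ofReal_inv_of_pos hc]
  simp_rw [hpt]
  rw [lintegral_const_mul' _ _ (by simp [hc] : (ENNReal.ofReal c)⁻¹ ≠ ⊤)]
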